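/- Under the standing setup, for every adhesion set {x,y} of (T,𝒱) one has (x·y⁻¹)² = 1 in G; equivalently, the element x·y⁻¹ is an involution of G. -/

import Mathlib

open SimpleGraph Set Pointwise

namespace CayleyConn2

/-- The Cayley graph of `G` with respect to `S`: `g` adjacent to `h` iff `g ≠ h` and
`g⁻¹ * h ∈ S ∪ S⁻¹`. -/
def cayley (G : Type*) [Group G] (S : Set G) : SimpleGraph G :=
  SimpleGraph.fromRel (fun g h => g⁻¹ * h ∈ S)

/-- A graph is cubic if every vertex has degree `3`. -/
def Cubic {V : Type*} (Γ : SimpleGraph V) : Prop :=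
  ∀ v : V, (Γ.neighborSet v).ncard = 3

/-- A graph has connectivity two: it is connected, deleting any one vertex leaves it
connected, and some set of two vertices disconnects it. -/
def ConnectivityTwo {V : Type*} (Γ : SimpleGraph V) : Prop :=
  Γ.Connected ∧ (∀ v : V, (Γ.induce ({v}ᶜ : Set V)).Connected) ∧
    ∃ X : Set V, X.ncard = 2 ∧ ¬ (Γ.induce (Xᶜ : Set V)).Connected

/-- `(A, B)` is a separation of `Γ`. -/
def IsSeparation {V : Type*} (Γ : SimpleGraph V) (A B : Set V) : Prop :=
  A ∪ B = Set.univ ∧ ∀ ⦃u v : V⦄, Γ.Adj u v → (u ∈ A ∧ v ∈ A) ∨ (u ∈ B ∧ v ∈ B)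

/-- The order of a separation `(A, B)`. -/
noncomputable def sepOrder {V : Type*} (A B : Set V) : ℕ := (A ∩ B).ncard

/-- `u` and `v` are joined by a walk all of whose vertices lie in `s`. -/
def ReachIn {V : Type*} (Γ : SimpleGraph V) (s : Set V) (u v : V) : Prop :=
  ∃ p : Γ.Walk u v, ∀ w ∈ p.support, w ∈ s

/-- `u` and `v` are joined by a walk avoiding the vertex set `X`. -/
def ReachAvoiding {V : Type*} (Γ : SimpleGraph V) (X : Set V) (u v : V) : Prop :=
  ReachIn Γ Xᶜ u v

/-- `r` is a (one-way infinite) ray of `Γ`. -/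
def IsRay {V : Type*} (Γ : SimpleGraph V) (r : ℕ → V) : Prop :=
  Function.Injective r ∧ ∀ n : ℕ, Γ.Adj (r n) (r (n + 1))

/-- Two rays are equivalent (belong to the same end) if no finite vertex set separates
tails of them. -/
def RayEquiv {V : Type*} (Γ : SimpleGraph V) (r₁ r₂ : ℕ → V) : Prop :=
  ∀ X : Set V, X.Finite → ∃ N : ℕ, ∀ m n : ℕ, N ≤ m → N ≤ n →
    ReachAvoiding Γ X (r₁ m) (r₂ n)

/-- The ray `r` has a tail in the vertex set `s`. -/
def HasTailIn {V : Type*} (r : ℕ → V) (s : Set V) : Prop :=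
  ∃ N : ℕ, ∀ n : ℕ, N ≤ n → r n ∈ s

/-- The separation `(A, B)` distinguishes the ends represented by `r₁` and `r₂`. -/
def SepDistinguishes {V : Type*} (A B : Set V) (r₁ r₂ : ℕ → V) : Prop :=
  (HasTailIn r₁ (A \ B) ∧ HasTailIn r₂ (B \ A)) ∨
    (HasTailIn r₂ (A \ B) ∧ HasTailIn r₁ (B \ A))

/-- The separation `(A, B)` distinguishes the ends represented by `r₁` and `r₂`
efficiently: no separation of smaller order distinguishes them. -/
def SepDistinguishesEff {V : Type*} (Γ : SimpleGraph V) (A B : Set V) (r₁ r₂ : ℕ → V) :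
    Prop :=
  SepDistinguishes A B r₁ r₂ ∧
    ∀ C D : Set V, IsSeparation Γ C D → sepOrder C D < sepOrder A B →
      ¬ SepDistinguishes C D r₁ r₂

/-- The set `side` contains a component of `Γ - X` whose neighbourhood is all of `X`. -/
def TightSide {V : Type*} (Γ : SimpleGraph V) (X side : Set V) : Prop :=
  ∃ v ∈ side, v ∉ X ∧ (∀ c : V, ReachAvoiding Γ X v c → c ∈ side) ∧
    ∀ x ∈ X, ∃ c : V, ReachAvoiding Γ X v c ∧ Γ.Adj x c

/-- The separation `(A, B)` is tight. -/
def TightSep {V : Type*} (Γ : SimpleGraph V) (A B : Set V) : Prop :=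
  TightSide Γ (A ∩ B) (A \ B) ∧ TightSide Γ (A ∩ B) (B \ A)

/-- The partial order on separations. -/
def SepLE {V : Type*} (A B C D : Set V) : Prop := A ⊆ C ∧ D ⊆ B

/-- Two separations are nested. -/
def Nested {V : Type*} (A B C D : Set V) : Prop :=
  SepLE A B C D ∨ SepLE C D A B ∨ SepLE A B D C ∨ SepLE D C A B

/-- A separation `(A,B)` of order two with `A ∩ B = {x,y}` is of Type I. -/
def TypeI {V : Type*} (Γ : SimpleGraph V) (A B : Set V) : Prop :=
  ∃ x y : V, x ≠ y ∧ A ∩ B = {x, y} ∧ Γ.Adj x y ∧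
    (Γ.neighborSet x ∩ (A \ B)).ncard = 1 ∧ (Γ.neighborSet x ∩ (B \ A)).ncard = 1 ∧
    (Γ.neighborSet y ∩ (A \ B)).ncard = 1 ∧ (Γ.neighborSet y ∩ (B \ A)).ncard = 1

/-- A separation `(A,B)` of order two with `A ∩ B = {x,y}` is of Type II. -/
def TypeII {V : Type*} (Γ : SimpleGraph V) (A B : Set V) : Prop :=
  ∃ x y : V, x ≠ y ∧ A ∩ B = {x, y} ∧ ¬ Γ.Adj x y ∧
    (((Γ.neighborSet x ∩ (A \ B)).ncard = 2 ∧ (Γ.neighborSet x ∩ (B \ A)).ncard = 1 ∧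
      (Γ.neighborSet y ∩ (A \ B)).ncard = 2 ∧ (Γ.neighborSet y ∩ (B \ A)).ncard = 1) ∨
     ((Γ.neighborSet x ∩ (A \ B)).ncard = 1 ∧ (Γ.neighborSet x ∩ (B \ A)).ncard = 2 ∧
      (Γ.neighborSet y ∩ (A \ B)).ncard = 1 ∧ (Γ.neighborSet y ∩ (B \ A)).ncard = 2))

/-- A separation `(A,B)` of order two with `A ∩ B = {x,y}` is of Type III. -/
def TypeIII {V : Type*} (Γ : SimpleGraph V) (A B : Set V) : Prop :=
  ∃ x y : V, x ≠ y ∧ A ∩ B = {x, y} ∧ ¬ Γ.Adj x y ∧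
    (Γ.neighborSet x ∩ (A \ B)).ncard = 2 ∧ (Γ.neighborSet x ∩ (B \ A)).ncard = 1 ∧
    (Γ.neighborSet y ∩ (A \ B)).ncard = 1 ∧ (Γ.neighborSet y ∩ (B \ A)).ncard = 2

/-- A tree-decomposition of `Γ` modelled on the graph `T`. -/
structure TreeDecomp {ι V : Type*} (T : SimpleGraph ι) (Γ : SimpleGraph V) where
  part : ι → Set V
  covers : ∀ v : V, ∃ t : ι, v ∈ part t
  edge_in_part : ∀ ⦃u v : V⦄, Γ.Adj u v → ∃ t : ι, u ∈ part t ∧ v ∈ part t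
  path_inter : ∀ ⦃t₁ t₂ t₃ : ι⦄ (p : T.Walk t₁ t₃), p.IsPath → t₂ ∈ p.support →
    part t₁ ∩ part t₃ ⊆ part t₂

/-- The nodes on the side of `t` of the edge `tt'`: those reachable from `t` by a walk
avoiding the edge `tt'`. -/
def sideNodes {ι : Type*} (T : SimpleGraph ι) (t t' : ι) : Set ι :=
  {s : ι | ∃ p : T.Walk t s, s(t, t') ∉ p.edges}

/-- `W_{t∖t'}`: the union of the parts on the side of `t` of the edge `tt'`. -/
def TreeDecomp.W {ι V : Type*} {T : SimpleGraph ι} {Γ : SimpleGraph V}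
    (D : TreeDecomp T Γ) (t t' : ι) : Set V :=
  ⋃ s ∈ sideNodes T t t', D.part s

/-- The torso of the part `V_t` of a tree-decomposition. -/
def TreeDecomp.torso {ι V : Type*} {T : SimpleGraph ι} {Γ : SimpleGraph V}
    (D : TreeDecomp T Γ) (t : ι) : SimpleGraph (D.part t) where
  Adj u v := u ≠ v ∧ (Γ.Adj u v ∨
    ∃ t' : ι, T.Adj t t' ∧ (u : V) ∈ D.part t' ∧ (v : V) ∈ D.part t')
  symm := ⟨by
    rintro u v ⟨hne, h | ⟨t', h1, h2, h3⟩⟩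
    · exact ⟨hne.symm, Or.inl h.symm⟩
    · exact ⟨hne.symm, Or.inr ⟨t', h1, h3, h2⟩⟩⟩
  loopless := ⟨fun u h => h.1 rfl⟩

/-- The induced subgraph on `s` is a finite cycle: `s` is finite and nonempty, induces a
connected subgraph, and every vertex of `s` has exactly two neighbours inside `s`. -/
def IsCycleSet {V : Type*} (Γ : SimpleGraph V) (s : Set V) : Prop :=
  s.Finite ∧ s.Nonempty ∧ (Γ.induce s).Connected ∧
    ∀ v ∈ s, (Γ.neighborSet v ∩ s).ncard = 2

/-- The standing setup: `G` is an infinite group, finitely generated by `S`, whose Cayley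
graph is cubic of connectivity two, and `(T, 𝒱)` is a tree-decomposition of the Cayley
graph with adhesion sets of size two whose induced separations are tight, distinguish two
ends efficiently and are pairwise nested, such that the left multiplication action of `G`
maps parts to parts and is transitive on the induced separations. -/
structure Standing (G : Type*) [Group G] (S : Set G) {ι : Type*} (T : SimpleGraph ι)
    (D : TreeDecomp T (cayley G S)) : Prop where
  infinite : Infinite G
  Sfin : S.Finite
  Sgen : Subgroup.closure S = ⊤
  cubic : Cubic (cayley G S)
  conn2 : ConnectivityTwo (cayley G S)
  tree : T.IsTree
  adhesion_card : ∀ ⦃t t' : ι⦄, T.Adj t t' → (D.part t ∩ D.part t').encard = 2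
  ind_sep : ∀ ⦃t t' : ι⦄, T.Adj t t' → IsSeparation (cayley G S) (D.W t t') (D.W t' t)
  ind_tight : ∀ ⦃t t' : ι⦄, T.Adj t t' → TightSep (cayley G S) (D.W t t') (D.W t' t)
  ind_dist : ∀ ⦃t t' : ι⦄, T.Adj t t' → ∃ r₁ r₂ : ℕ → G, IsRay (cayley G S) r₁ ∧
    IsRay (cayley G S) r₂ ∧ ¬ RayEquiv (cayley G S) r₁ r₂ ∧
    SepDistinguishesEff (cayley G S) (D.W t t') (D.W t' t) r₁ r₂
  nested : ∀ ⦃t t' s s' : ι⦄, T.Adj t t' → T.Adj s s' →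
    Nested (D.W t t') (D.W t' t) (D.W s s') (D.W s' s)
  parts_invariant : ∀ (g : G) (t : ι), ∃ t' : ι, (g * ·) '' D.part t = D.part t'
  sep_trans : ∀ ⦃t t' s s' : ι⦄, T.Adj t t' → T.Adj s s' →
    ∃ g : G, (g * ·) '' D.W t t' = D.W s s' ∧ (g * ·) '' D.W t' t = D.W s' s

/-- The set of relators of an amalgamated free product. -/
def AmalgRels {A B C : Type*} [Group A] [Group B] [Group C]
    (f₁ : C →* A) (f₂ : C →* B) : Set (Monoid.Coprod A B) :=
  {x : Monoid.Coprod A B |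
    ∃ c : C, x = Monoid.Coprod.inl (f₁ c) * (Monoid.Coprod.inr (f₂ c))⁻¹}

/-- The amalgamated free product `A *_C B` along `f₁ : C →* A` and `f₂ : C →* B`,
as the pushout of `f₁` and `f₂`. -/
def AmalgamatedProduct {A B C : Type*} [Group A] [Group B] [Group C]
    (f₁ : C →* A) (f₂ : C →* B) : Type _ :=
  Monoid.Coprod A B ⧸ Subgroup.normalClosure (AmalgRels f₁ f₂)

instance {A B C : Type*} [Group A] [Group B] [Group C] (f₁ : C →* A) (f₂ : C →* B) :
    Group (AmalgamatedProduct f₁ f₂) :=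
  QuotientGroup.Quotient.group _

/-- The canonical homomorphism from an amalgamated free product induced by homomorphisms
on the two factors that agree on the amalgamated subgroup. -/
def amalgLift {A B C G : Type*} [Group A] [Group B] [Group C] [Group G]
    (f₁ : C →* A) (f₂ : C →* B) (g₁ : A →* G) (g₂ : B →* G)
    (hcomm : ∀ c : C, g₁ (f₁ c) = g₂ (f₂ c)) : AmalgamatedProduct f₁ f₂ →* G :=
  QuotientGroup.lift _ (Monoid.Coprod.lift g₁ g₂) (by
    apply Subgroup.normalClosure_le_normal
    rintro y ⟨c, rfl⟩
    simp [MonoidHom.mem_ker, hcomm c])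

/-- In an acyclic graph, any walk between the endpoints of an edge uses that edge. -/
lemma edge_mem_walk {ι : Type*} {T : SimpleGraph ι} (hT : T.IsAcyclic) {t t' : ι}
    (h : T.Adj t t') (w : T.Walk t t') : s(t, t') ∈ w.edges := by
  classical
  have hp : (Walk.cons h (Walk.nil)).IsPath := by simp [h.ne]
  have huniq := hT.path_unique ⟨w.bypass, w.bypass_isPath⟩ ⟨Walk.cons h Walk.nil, hp⟩
  apply w.edges_bypass_subset
  have hb : w.bypass = Walk.cons h Walk.nil := congrArg Subtype.val huniq
  rw [hb]; simp

/-- The two sides of an edge of an acyclic graph are disjoint. -/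
lemma side_disjoint {ι : Type*} {T : SimpleGraph ι} (hT : T.IsAcyclic) {t t' s : ι}
    (h : T.Adj t t') (h1 : s ∈ sideNodes T t t') (h2 : s ∈ sideNodes T t' t) : False := by
  obtain ⟨p, hp⟩ := h1
  obtain ⟨q, hq⟩ := h2
  have hm := edge_mem_walk hT h (p.append q.reverse)
  rw [Walk.edges_append, List.mem_append, Walk.edges_reverse, List.mem_reverse] at hm
  rcases hm with hm | hm
  · exact hp hm
  · exact hq (by rwa [Sym2.eq_swap] at hm)

/-- The separator of the separation induced by an edge of a tree-decomposition over a
tree is the corresponding adhesion set. -/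
lemma sep_inter_eq_adhesion {ι V : Type*} {T : SimpleGraph ι} {Γ : SimpleGraph V}
    (D : TreeDecomp T Γ) (hT : T.IsTree) {t t' : ι} (h : T.Adj t t') :
    D.W t t' ∩ D.W t' t = D.part t ∩ D.part t' := by
  classical
  apply Set.Subset.antisymm
  · rintro v ⟨hv1, hv2⟩
    simp only [TreeDecomp.W, Set.mem_iUnion] at hv1 hv2
    obtain ⟨s, hs, hvs⟩ := hv1
    obtain ⟨s', hs', hvs'⟩ := hv2
    obtain ⟨w⟩ := hT.isConnected.preconnected s s'
    set p := w.bypass with hpdef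
    have hp : p.IsPath := w.bypass_isPath
    by_cases he : s(t, t') ∈ p.edges
    · have ht : t ∈ p.support := p.fst_mem_support_of_mem_edges he
      have ht' : t' ∈ p.support := p.snd_mem_support_of_mem_edges he
      exact ⟨D.path_inter p hp ht ⟨hvs, hvs'⟩, D.path_inter p hp ht' ⟨hvs, hvs'⟩⟩
    · exfalso
      obtain ⟨q, hq⟩ := hs
      have : s' ∈ sideNodes T t t' := by
        refine ⟨q.append p, ?_⟩
        rw [Walk.edges_append, List.mem_append]
        rintro (hm | hm)
        · exact hq hm
        · exact he hm
      exact side_disjoint hT.IsAcyclic h this hs'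
  · rintro v ⟨hv1, hv2⟩
    constructor
    · exact Set.mem_biUnion (⟨Walk.nil, by simp⟩ : t ∈ sideNodes T t t') hv1
    · exact Set.mem_biUnion (⟨Walk.nil, by simp⟩ : t' ∈ sideNodes T t' t) hv2

/-- For every adhesion set `{x, y}` the element `x * y⁻¹` squares to
the identity. -/
theorem stmt_7 {G ι : Type*} [Group G] (S : Set G) (T : SimpleGraph ι)
    (D : TreeDecomp T (cayley G S)) (hst : Standing G S T D)
    (t t' : ι) (h : T.Adj t t') (x y : G) (hxy : x ≠ y)
    (hadh : D.part t ∩ D.part t' = {x, y}) :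
    (x * y⁻¹) ^ 2 = 1 := by
  obtain ⟨g, hgA, hgB⟩ := hst.sep_trans h h.symm
  have hsep : D.W t t' ∩ D.W t' t = {x, y} :=
    (sep_inter_eq_adhesion D hst.tree h).trans hadh
  have himg : (g * ·) '' ({x, y} : Set G) = {x, y} := by
    rw [← hsep, Set.image_inter (mul_right_injective g), hgA, hgB, Set.inter_comm, hsep]
  -- the left side of the separation is nonempty in difference
  have hne : (D.W t t' \ D.W t' t).Nonempty := by
    obtain ⟨r₁, r₂, _, _, _, hdist, _⟩ := hst.ind_dist h
    rcases hdist with ⟨⟨N, hN⟩, _⟩ | ⟨⟨N, hN⟩, _⟩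
    · exact ⟨r₁ N, hN N le_rfl⟩
    · exact ⟨r₂ N, hN N le_rfl⟩
  have hgne : g ≠ 1 := by
    rintro rfl
    simp only [one_mul] at hgA
    rw [Set.image_id'] at hgA
    rw [hgA] at hne
    simp at hne
  have hx_mem : g * x ∈ ({x, y} : Set G) := by
    rw [← himg]; exact Set.mem_image_of_mem _ (by simp)
  have hy_mem : g * y ∈ ({x, y} : Set G) := by
    rw [← himg]; exact Set.mem_image_of_mem _ (by simp)
  have hgx : g * x = y := by
    rcases hx_mem with hx | hx
    · exact absurd (mul_eq_right.mp hx) hgne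
    · exact hx
  have hgy : g * y = x := by
    rcases hy_mem with hy | hy
    · exact hy
    · exact absurd (mul_eq_right.mp hy) hgne
  have hg : g = x * y⁻¹ := eq_mul_inv_iff_mul_eq.mpr hgy
  have hgg : g * g = 1 := by
    have hfix : (g * g) * x = x := by rw [mul_assoc, hgx, hgy]
    exact mul_eq_right.mp hfix
  rw [pow_two, ← hg]
  exact hgg

end CayleyConn2
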